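/- Under the randomized forecasting construction satisfying the mean-preserving condition, and with the receiver playing a_n = â(f_n) at every period, the sender's long-run average payoff converges almost surely: (1/T) Σ_{t=1}^T u_S(X_t, â(f_t)) → Σ_{p ∈ D} C_μ(p) Σ_{f ∈ F} π(f | p) Σ_{ω ∈ Ω} p(ω) u_S(ω, â(f)) as T → ∞. In particular, taking π to be an optimal signaling policy of the static persuasion problem with prior C_μ and indirect utility û_S(f) = Σ_ω f(ω) u_S(ω, â(f)), the informed sender's long-run average payoff equals the persuasion value Per(C_μ, û_S) (the achievability half of the main theorem). -/

import Mathlib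

open Filter MeasureTheory ProbabilityTheory

noncomputable section

variable {Ω : Type*} [Fintype Ω] [DecidableEq Ω]

/-- The conditional law `p_n(x) ∈ ΔΩ` of the `n`-th coordinate given the first `n`
coordinates of `x`, for a measure `μ` on `Ω^ℕ` (junk value `0/0` on null cylinders). -/
def condLaw [MeasurableSpace Ω] (μ : Measure (ℕ → Ω)) (n : ℕ) (x : ℕ → Ω) :
    EuclideanSpace ℝ Ω :=
  WithLp.toLp 2 (fun a => (μ {y | (∀ i < n, y i = x i) ∧ y n = a}).toReal /
    (μ {y | ∀ i < n, y i = x i}).toReal)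

section Aux

set_option maxHeartbeats 1000000
set_option linter.unusedSectionVars false

open Classical

lemma psv_tendsto_nat_sqrt_atTop : Tendsto Nat.sqrt atTop atTop := by
  apply tendsto_atTop_atTop_of_monotone (fun a b h => Nat.sqrt_le_sqrt h)
  intro b; exact ⟨b ^ 2, by simp [pow_two, Nat.sqrt_eq]⟩

/-- Deterministic gap-filling: convergence of averages along squares plus boundedness
gives convergence of averages. -/
lemma psv_gapfill (Z : ℕ → ℝ) (B : ℝ) (hB : ∀ t, |Z t| ≤ B)
    (h : Tendsto (fun k : ℕ => ((k ^ 2 : ℕ) : ℝ)⁻¹ * ∑ t ∈ Finset.range (k ^ 2), Z t)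
      atTop (nhds 0)) :
    Tendsto (fun T : ℕ => (T : ℝ)⁻¹ * ∑ t ∈ Finset.range T, Z t) atTop (nhds 0) := by
  have hB0 : 0 ≤ B := le_trans (abs_nonneg _) (hB 0)
  set S : ℕ → ℝ := fun T => ∑ t ∈ Finset.range T, Z t with hS
  set g : ℕ → ℝ := fun T =>
    |((Nat.sqrt T ^ 2 : ℕ) : ℝ)⁻¹ * S (Nat.sqrt T ^ 2)|
      + B * (2 * (Nat.sqrt T : ℝ) + 1) / ((Nat.sqrt T : ℝ) ^ 2) with hg
  have hgto : Tendsto g atTop (nhds 0) := by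
    have h1 : Tendsto (fun k : ℕ => |((k ^ 2 : ℕ) : ℝ)⁻¹ * S (k ^ 2)|) atTop (nhds 0) := by
      simpa using h.abs
    have h2 : Tendsto (fun k : ℕ => B * (2 * (k : ℝ) + 1) / ((k : ℝ) ^ 2)) atTop (nhds 0) := by
      have : (fun k : ℕ => B * (2 * (k : ℝ) + 1) / ((k : ℝ) ^ 2))
          =ᶠ[atTop] fun k : ℕ => 2 * B * (k : ℝ)⁻¹ + B * ((k : ℝ)⁻¹) ^ 2 := by
        filter_upwards [eventually_gt_atTop 0] with k hk
        have hk' : (k : ℝ) ≠ 0 := Nat.cast_ne_zero.2 hk.ne'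
        field_simp
      rw [tendsto_congr' this]
      have hinv : Tendsto (fun k : ℕ => (k : ℝ)⁻¹) atTop (nhds 0) :=
        tendsto_inv_atTop_zero.comp tendsto_natCast_atTop_atTop
      have := ((hinv.const_mul (2 * B)).add ((hinv.pow 2).const_mul B))
      simpa using this
    have := (h1.add h2).comp psv_tendsto_nat_sqrt_atTop
    simpa [g, Function.comp_def] using this
  have key : ∀ᶠ T : ℕ in atTop, |(T : ℝ)⁻¹ * S T| ≤ g T := by
    filter_upwards [eventually_ge_atTop 1] with T hT
    set k := Nat.sqrt T with hk
    have hk1 : 1 ≤ k := by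
      have := Nat.sqrt_le_sqrt hT
      simpa [hk] using this
    have hkT : k ^ 2 ≤ T := by simpa [pow_two] using Nat.sqrt_le' T
    have hTk : T < (k + 1) ^ 2 := by simpa [pow_two] using Nat.lt_succ_sqrt' T
    have hdiff : |S T - S (k ^ 2)| ≤ B * ((T : ℝ) - (k ^ 2 : ℕ)) := by
      have : S T - S (k ^ 2) = ∑ t ∈ Finset.Ico (k ^ 2) T, Z t := by
        rw [hS]
        rw [Finset.sum_Ico_eq_sub _ hkT]
      rw [this]
      calc |∑ t ∈ Finset.Ico (k ^ 2) T, Z t| ≤ ∑ t ∈ Finset.Ico (k ^ 2) T, |Z t| :=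
            Finset.abs_sum_le_sum_abs _ _
        _ ≤ ∑ _t ∈ Finset.Ico (k ^ 2) T, B := Finset.sum_le_sum fun t _ => hB t
        _ = B * ((T : ℝ) - (k ^ 2 : ℕ)) := by
            rw [Finset.sum_const, Nat.card_Ico]
            rw [nsmul_eq_mul, Nat.cast_sub hkT]; ring
    have hT0 : (0 : ℝ) < T := by exact_mod_cast Nat.lt_of_lt_of_le Nat.one_pos hT
    have hk0 : (0 : ℝ) < (k : ℝ) ^ 2 := by positivity
    have hkT' : ((k : ℝ) ^ 2) ≤ (T : ℝ) := by exact_mod_cast hkT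
    have hbound : |S T| ≤ |S (k ^ 2)| + B * (2 * (k : ℝ) + 1) := by
      have h1 : |S T| ≤ |S (k ^ 2)| + |S T - S (k ^ 2)| := by
        have := abs_add_le (S (k ^ 2)) (S T - S (k ^ 2)); simpa using this
      have h2 : (T : ℝ) - (k ^ 2 : ℕ) ≤ 2 * (k : ℝ) + 1 := by
        have : (T : ℝ) < ((k : ℝ) + 1) ^ 2 := by exact_mod_cast hTk
        push_cast
        nlinarith
      nlinarith [hdiff, abs_nonneg (S T - S (k ^ 2))]
    have : |(T : ℝ)⁻¹ * S T| = |S T| / T := by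
      rw [abs_mul, abs_inv, abs_of_pos hT0, inv_mul_eq_div]
    rw [this]
    have hnum : (0 : ℝ) ≤ |S (k ^ 2)| + B * (2 * (k : ℝ) + 1) := by positivity
    have habs2 : |((k ^ 2 : ℕ) : ℝ)⁻¹ * S (k ^ 2)| = |S (k ^ 2)| / (k : ℝ) ^ 2 := by
      rw [abs_mul, abs_inv, inv_mul_eq_div]
      congr 1
      rw [abs_of_pos]; · push_cast; ring
      · exact_mod_cast hk0
    calc |S T| / T ≤ (|S (k ^ 2)| + B * (2 * (k : ℝ) + 1)) / T := by gcongr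
      _ ≤ (|S (k ^ 2)| + B * (2 * (k : ℝ) + 1)) / ((k : ℝ) ^ 2) := by gcongr
      _ = g T := by simp only [hg, ← hk, habs2, add_div]
  have habs : Tendsto (fun T : ℕ => |(T : ℝ)⁻¹ * S T|) atTop (nhds 0) :=
    squeeze_zero' (Eventually.of_forall fun T => abs_nonneg _) key hgto
  exact tendsto_zero_iff_abs_tendsto_zero _ |>.mpr habs

/-- Strong law of large numbers for bounded pairwise-orthogonal sequences, along squares. -/
lemma psv_slln_orth {E : Type*} [MeasurableSpace E] (m : Measure E) [IsProbabilityMeasure m]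
    (Z : ℕ → E → ℝ) (hmeas : ∀ t, Measurable (Z t)) (B : ℝ) (hB0 : 0 ≤ B)
    (hB : ∀ t z, |Z t z| ≤ B)
    (horth : ∀ s t, s ≠ t → ∫ z, Z s z * Z t z ∂m = 0) :
    ∀ᵐ z ∂m, Tendsto (fun k : ℕ => ((k ^ 2 : ℕ) : ℝ)⁻¹ * ∑ t ∈ Finset.range (k ^ 2), Z t z)
      atTop (nhds 0) := by
  set S : ℕ → E → ℝ := fun T z => ∑ t ∈ Finset.range T, Z t z with hS
  have hint : ∀ s t, Integrable (fun z => Z s z * Z t z) m := by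
    intro s t
    refine Integrable.mono' (integrable_const (B * B))
      (((hmeas s).mul (hmeas t)).aestronglyMeasurable) ?_
    refine Eventually.of_forall fun z => ?_
    rw [Real.norm_eq_abs, abs_mul]
    exact mul_le_mul (hB s z) (hB t z) (abs_nonneg _) hB0
  have hSmeas : ∀ T, Measurable (fun z => S T z) := fun T =>
    Finset.measurable_sum _ fun t _ => hmeas t
  have hSsq_int : ∀ T, Integrable (fun z => (S T z) ^ 2) m := by
    intro T
    refine Integrable.mono' (integrable_const ((B * T) ^ 2))
      (((hSmeas T).pow_const 2).aestronglyMeasurable) (Eventually.of_forall fun z => ?_)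
    have h1 : |S T z| ≤ B * T := by
      calc |S T z| ≤ ∑ t ∈ Finset.range T, |Z t z| := Finset.abs_sum_le_sum_abs _ _
        _ ≤ ∑ _t ∈ Finset.range T, B := Finset.sum_le_sum fun t _ => hB t z
        _ = B * T := by simp [mul_comm]
    rw [Real.norm_eq_abs, abs_pow]
    exact pow_le_pow_left₀ (abs_nonneg _) h1 2
  have hsq : ∀ T : ℕ, ∫ z, (S T z) ^ 2 ∂m ≤ B ^ 2 * T := by
    intro T
    have expand : ∀ z, (S T z) ^ 2
        = ∑ s ∈ Finset.range T, ∑ t ∈ Finset.range T, Z s z * Z t z := by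
      intro z; rw [hS]; simp only [pow_two, Finset.sum_mul_sum]
    calc ∫ z, (S T z) ^ 2 ∂m
        = ∑ s ∈ Finset.range T, ∑ t ∈ Finset.range T, ∫ z, Z s z * Z t z ∂m := by
          simp_rw [expand]
          rw [integral_finset_sum _ (fun s _ => integrable_finset_sum _ (fun t _ => hint s t))]
          exact Finset.sum_congr rfl fun s _ => integral_finset_sum _ (fun t _ => hint s t)
      _ = ∑ s ∈ Finset.range T, ∫ z, Z s z * Z s z ∂m := by
          refine Finset.sum_congr rfl fun s _ => ?_
          rw [Finset.sum_eq_single s]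
          · intro t _ hts; exact horth s t (Ne.symm hts)
          · intro hs; exact absurd hs (by simp_all)
      _ ≤ ∑ _s ∈ Finset.range T, B ^ 2 := by
          refine Finset.sum_le_sum fun s _ => ?_
          calc ∫ z, Z s z * Z s z ∂m ≤ ∫ _z, B ^ 2 ∂m := by
                refine integral_mono (hint s s) (integrable_const _) fun z => ?_
                have := hB s z
                nlinarith [abs_nonneg (Z s z), neg_abs_le (Z s z), le_abs_self (Z s z)]
            _ = B ^ 2 := by simp
      _ = B ^ 2 * T := by simp [mul_comm]
  have cheb : ∀ (j k : ℕ),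
      m {z | ((j : ℝ) + 1)⁻¹ ≤ |(((k + 1) ^ 2 : ℕ) : ℝ)⁻¹ * S ((k + 1) ^ 2) z|}
        ≤ ENNReal.ofReal (B ^ 2 * ((j : ℝ) + 1) ^ 2 / ((k : ℝ) + 1) ^ 2) := by
    intro j k
    set N : ℕ := (k + 1) ^ 2 with hN
    have hNpos : (0 : ℝ) < N := by positivity
    set ε : ℝ := ((j : ℝ) + 1)⁻¹ with hε
    have hεpos : 0 < ε := by positivity
    have hsub : {z | ε ≤ |((N : ℕ) : ℝ)⁻¹ * S N z|}
        ⊆ {z | ((N : ℝ) * ε) ^ 2 ≤ (S N z) ^ 2} := by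
      intro z hz
      simp only [Set.mem_setOf_eq] at hz ⊢
      have h1 : (N : ℝ) * ε ≤ |S N z| := by
        have := hz
        rw [abs_mul, abs_inv, abs_of_pos hNpos, inv_mul_eq_div, le_div_iff₀ hNpos] at this
        linarith [this]
      calc ((N : ℝ) * ε) ^ 2 ≤ |S N z| ^ 2 := pow_le_pow_left₀ (by positivity) h1 2
        _ = (S N z) ^ 2 := sq_abs _
    have markov := mul_meas_ge_le_integral_of_nonneg
      (Eventually.of_forall (fun z => sq_nonneg (S N z))) (hSsq_int N) (((N : ℝ) * ε) ^ 2)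
    have hm1 : m {z | ((N : ℝ) * ε) ^ 2 ≤ (S N z) ^ 2} ≠ ⊤ := measure_ne_top _ _
    have htoReal : (m {z | ε ≤ |((N : ℕ) : ℝ)⁻¹ * S N z|}).toReal
        ≤ B ^ 2 * ((j : ℝ) + 1) ^ 2 / ((k : ℝ) + 1) ^ 2 := by
      have hle1 : (m {z | ε ≤ |((N : ℕ) : ℝ)⁻¹ * S N z|}).toReal
          ≤ (m {z | ((N : ℝ) * ε) ^ 2 ≤ (S N z) ^ 2}).toReal :=
        ENNReal.toReal_mono hm1 (measure_mono hsub)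
      have hle2 : (m {z | ((N : ℝ) * ε) ^ 2 ≤ (S N z) ^ 2}).toReal
          ≤ (B ^ 2 * N) / ((N : ℝ) * ε) ^ 2 := by
        rw [le_div_iff₀ (by positivity)]
        calc (m _).toReal * ((N : ℝ) * ε) ^ 2
            = ((N : ℝ) * ε) ^ 2 * (m _).toReal := by ring
          _ ≤ ∫ z, (S N z) ^ 2 ∂m := markov
          _ ≤ B ^ 2 * N := hsq N
      have heq : (B ^ 2 * N) / ((N : ℝ) * ε) ^ 2
          = B ^ 2 * ((j : ℝ) + 1) ^ 2 / ((k : ℝ) + 1) ^ 2 := by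
        have hNval : (N : ℝ) = ((k : ℝ) + 1) ^ 2 := by rw [hN]; push_cast; ring
        rw [hε, hNval]
        have h1 : ((j : ℝ) + 1) ≠ 0 := by positivity
        have h2 : ((k : ℝ) + 1) ≠ 0 := by positivity
        field_simp
      linarith
    calc m _ = ENNReal.ofReal ((m _).toReal) := (ENNReal.ofReal_toReal (measure_ne_top _ _)).symm
      _ ≤ ENNReal.ofReal _ := ENNReal.ofReal_le_ofReal htoReal
  have hBC : ∀ j : ℕ, ∀ᵐ z ∂m, ∀ᶠ k : ℕ in atTop,
      ¬ (((j : ℝ) + 1)⁻¹ ≤ |(((k + 1) ^ 2 : ℕ) : ℝ)⁻¹ * S ((k + 1) ^ 2) z|) := by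
    intro j
    have hsummable : Summable (fun k : ℕ => B ^ 2 * ((j : ℝ) + 1) ^ 2 / ((k : ℝ) + 1) ^ 2) := by
      have h0 : Summable (fun k : ℕ => 1 / ((k : ℝ) + 1) ^ 2) := by
        have hbase : Summable (fun n : ℕ => 1 / (n : ℝ) ^ 2) :=
          Real.summable_one_div_nat_pow.mpr one_lt_two
        have h1 := hbase.comp_injective (add_left_injective 1)
        exact h1.congr fun k => by
          simp only [Function.comp]; push_cast; ring
      exact (h0.mul_left (B ^ 2 * ((j : ℝ) + 1) ^ 2)).congr fun k => mul_one_div _ _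
    have htsum : (∑' k : ℕ, m {z | ((j : ℝ) + 1)⁻¹ ≤
        |(((k + 1) ^ 2 : ℕ) : ℝ)⁻¹ * S ((k + 1) ^ 2) z|}) ≠ ⊤ := by
      refine ne_top_of_le_ne_top ?_ (ENNReal.tsum_le_tsum (fun k => cheb j k))
      rw [← ENNReal.ofReal_tsum_of_nonneg (fun k => by positivity) hsummable]
      exact ENNReal.ofReal_ne_top
    exact ae_eventually_notMem htsum
  rw [← ae_all_iff] at hBC
  filter_upwards [hBC] with z hz
  rw [Metric.tendsto_atTop]
  intro ε hε
  obtain ⟨j, hj⟩ := exists_nat_one_div_lt hε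
  obtain ⟨K, hK⟩ := (hz j).exists_forall_of_atTop
  refine ⟨K + 1, fun k hk => ?_⟩
  have hk1 : 1 ≤ k := le_trans (Nat.le_add_left 1 K) hk
  have := hK (k - 1) (by omega)
  rw [not_le] at this
  have hkeq : (k - 1) + 1 = k := by omega
  rw [hkeq] at this
  rw [Real.dist_eq, sub_zero]
  calc |((k ^ 2 : ℕ) : ℝ)⁻¹ * S (k ^ 2) z| < ((j : ℝ) + 1)⁻¹ := this
    _ < ε := by rw [inv_eq_one_div]; exact_mod_cast hj

/-- SLLN for bounded pairwise-orthogonal sequences. -/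
lemma psv_slln {E : Type*} [MeasurableSpace E] (m : Measure E) [IsProbabilityMeasure m]
    (Z : ℕ → E → ℝ) (hmeas : ∀ t, Measurable (Z t)) (B : ℝ) (hB0 : 0 ≤ B)
    (hB : ∀ t z, |Z t z| ≤ B)
    (horth : ∀ s t, s ≠ t → ∫ z, Z s z * Z t z ∂m = 0) :
    ∀ᵐ z ∂m, Tendsto (fun T : ℕ => (T : ℝ)⁻¹ * ∑ t ∈ Finset.range T, Z t z)
      atTop (nhds 0) := by
  filter_upwards [psv_slln_orth m Z hmeas B hB0 hB horth] with z hz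
  exact psv_gapfill (fun t => Z t z) B (fun t => hB t z) hz

lemma psv_condLaw_congr [MeasurableSpace Ω] (μ : Measure (ℕ → Ω)) (n : ℕ) {x y : ℕ → Ω}
    (h : ∀ i < n, x i = y i) : condLaw μ n x = condLaw μ n y := by
  have hs : {z : ℕ → Ω | ∀ i < n, z i = x i} = {z : ℕ → Ω | ∀ i < n, z i = y i} := by
    ext z; exact ⟨fun hz i hi => (hz i hi).trans (h i hi),
      fun hz i hi => (hz i hi).trans (h i hi).symm⟩
  refine congrArg (WithLp.toLp 2) (funext fun a => ?_)
  have hs2 : {z : ℕ → Ω | (∀ i < n, z i = x i) ∧ z n = a}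
      = {z : ℕ → Ω | (∀ i < n, z i = y i) ∧ z n = a} := by
    ext z
    exact ⟨fun ⟨hz, hz2⟩ => ⟨fun i hi => (hz i hi).trans (h i hi), hz2⟩,
      fun ⟨hz, hz2⟩ => ⟨fun i hi => (hz i hi).trans (h i hi).symm, hz2⟩⟩
  simp only [condLaw, hs, hs2]

/-- A function of the first `n` coordinates is measurable (`Ω` discrete). -/
lemma psv_meas_of_depends [MeasurableSpace Ω] [MeasurableSingletonClass Ω] {β : Type*}
    [MeasurableSpace β] (n : ℕ) (f : (ℕ → Ω) → β)
    (hf : ∀ x y : ℕ → Ω, (∀ i < n, x i = y i) → f x = f y) : Measurable f := by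
  rcases isEmpty_or_nonempty Ω with h | h
  · have : IsEmpty (ℕ → Ω) := ⟨fun x => h.false (x 0)⟩
    exact measurable_of_empty f
  · set ext1 : (Fin n → Ω) → (ℕ → Ω) :=
      fun v i => if h : i < n then v ⟨i, h⟩ else Classical.arbitrary Ω with hext
    have hfac : f = (f ∘ ext1) ∘ (fun x (i : Fin n) => x i) := by
      funext x
      exact hf x _ (fun i hi => by simp [hext, hi])
    rw [hfac]
    exact (measurable_of_finite (f ∘ ext1)).comp
      (measurable_pi_lambda _ fun i => measurable_pi_apply (i : ℕ))

/-- Martingale-difference orthogonality: the conditional-one-step-law innovation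
at time `t` integrates to zero against any function of the first `t` coordinates. -/
lemma psv_mart_orth [MeasurableSpace Ω] [MeasurableSingletonClass Ω] [Nonempty Ω]
    (μ : Measure (ℕ → Ω)) [IsProbabilityMeasure μ] (t : ℕ)
    (G : (ℕ → Ω) → ℝ) (hG : ∀ x y : ℕ → Ω, (∀ i < t, x i = y i) → G x = G y)
    (p : EuclideanSpace ℝ Ω) (ω : Ω) :
    ∫ x, G x * ((if condLaw μ t x = p then (1 : ℝ) else 0) *
      ((if x t = ω then (1 : ℝ) else 0) - p ω)) ∂μ = 0 := by
  classical
  set I : (ℕ → Ω) → ℝ := fun x => G x * ((if condLaw μ t x = p then (1 : ℝ) else 0) *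
      ((if x t = ω then (1 : ℝ) else 0) - p ω)) with hI
  set π : (ℕ → Ω) → (Fin (t + 1) → Ω) := fun x i => x i with hπdef
  have hπ : Measurable π := measurable_pi_lambda _ fun i => measurable_pi_apply (i : ℕ)
  set ext1 : (Fin (t + 1) → Ω) → (ℕ → Ω) :=
    fun v i => if h : i < t + 1 then v ⟨i, h⟩ else Classical.arbitrary Ω with hext
  have hIdep : ∀ x y : ℕ → Ω, (∀ i < t + 1, x i = y i) → I x = I y := by
    intro x y h
    have h1 : G x = G y := hG x y fun i hi => h i (by omega)
    have h2 : condLaw μ t x = condLaw μ t y := psv_condLaw_congr μ t fun i hi => h i (by omega)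
    have h3 : x t = y t := h t (by omega)
    simp only [hI, h1, h2, h3]
  have hfac : ∀ x, I x = (I ∘ ext1) (π x) := by
    intro x
    exact hIdep x _ (fun i hi => by simp [hext, hπdef, hi]; intro h; omega)
  have hImeas' : Measurable (I ∘ ext1) := measurable_of_finite _
  haveI : IsProbabilityMeasure (μ.map π) := Measure.isProbabilityMeasure_map hπ.aemeasurable
  have h1 : ∫ x, I x ∂μ = ∫ v, (I ∘ ext1) v ∂(μ.map π) := by
    rw [integral_map hπ.aemeasurable hImeas'.aestronglyMeasurable]
    exact integral_congr_ae (Eventually.of_forall hfac)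
  show ∫ x, I x ∂μ = 0
  rw [h1, integral_fintype .of_finite]
  set e := Fin.insertNthEquiv (fun _ : Fin (t + 1) => Ω) (Fin.last t) with he
  rw [← Equiv.sum_comp e (fun v => (μ.map π).real {v} • (I ∘ ext1) v)]
  rw [Fintype.sum_prod_type]
  rw [Finset.sum_comm]
  apply Finset.sum_eq_zero
  intro w _
  set xw : ℕ → Ω := fun i => if h : i < t then w ⟨i, h⟩ else Classical.arbitrary Ω with hxw
  set Sa : Ω → Set (ℕ → Ω) := fun a => {y | (∀ i < t, y i = xw i) ∧ y t = a} with hSa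
  set Cw : Set (ℕ → Ω) := {y | ∀ i < t, y i = xw i} with hCw
  have hval : ∀ a : Ω, ∀ i (hi : i < t), (e (a, w) : Fin (t + 1) → Ω) ⟨i, by omega⟩
      = w ⟨i, hi⟩ := by
    intro a i hi
    have h2 : (⟨i, by omega⟩ : Fin (t + 1)) = Fin.castSucc ⟨i, hi⟩ := rfl
    rw [he, h2]
    simp [Fin.insertNthEquiv, Fin.snoc, hi]
  have hvalt : ∀ a : Ω, (e (a, w) : Fin (t + 1) → Ω) (Fin.last t) = a := by
    intro a
    rw [he]
    simp [Fin.insertNthEquiv, Fin.snoc_last]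
  have hlast : (Fin.last t) = (⟨t, by omega⟩ : Fin (t + 1)) := rfl
  have hext1_lt : ∀ a : Ω, ∀ i, i < t → ext1 (e (a, w)) i = xw i := by
    intro a i hi
    rw [hext, hxw]
    simp only [dif_pos (show i < t + 1 by omega), dif_pos hi]
    exact hval a i hi
  have hext1_t : ∀ a : Ω, ext1 (e (a, w)) t = a := by
    intro a
    rw [hext]
    simp only [dif_pos (show t < t + 1 by omega)]
    rw [← hlast]
    exact hvalt a
  have hpre : ∀ a : Ω, π ⁻¹' {e (a, w)} = Sa a := by
    intro a
    ext y
    simp only [Set.mem_preimage, Set.mem_singleton_iff, hSa, Set.mem_setOf_eq, funext_iff, hπdef]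
    constructor
    · intro h
      constructor
      · intro i hi
        rw [← hext1_lt a i hi, hext]
        simp only [dif_pos (show i < t + 1 by omega)]
        exact h ⟨i, by omega⟩
      · rw [← hext1_t a, hext]
        simp only [dif_pos (show t < t + 1 by omega)]
        rw [← hlast]
        exact h (Fin.last t)
    · rintro ⟨h1, h2⟩ i
      rcases Nat.lt_or_ge (i : ℕ) t with hi | hi
      · have hieq : i = (⟨(i : ℕ), by omega⟩ : Fin (t + 1)) := by simp [Fin.ext_iff]
        rw [hieq, hval a (i : ℕ) hi]
        rw [h1 (i : ℕ) hi, hxw]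
        simp [hi]
      · have hit : (i : ℕ) = t := by omega
        have hieq : i = Fin.last t := by simp [Fin.ext_iff, hit]
        rw [hieq, hvalt a]
        exact hit ▸ h2
  have hmap : ∀ a : Ω, (μ.map π) {e (a, w)} = μ (Sa a) := fun a => by
    rw [Measure.map_apply hπ (measurableSet_singleton _), hpre a]
  have hIval : ∀ a : Ω, (I ∘ ext1) (e (a, w)) =
      G xw * ((if condLaw μ t xw = p then (1 : ℝ) else 0) *
        ((if a = ω then (1 : ℝ) else 0) - p ω)) := by
    intro a
    have hagree : ∀ i < t, ext1 (e (a, w)) i = xw i := fun i hi => hext1_lt a i hi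
    show I (ext1 (e (a, w))) = _
    rw [hI]
    simp only
    rw [hG _ xw hagree, psv_condLaw_congr μ t hagree, hext1_t a]
  simp only [Measure.real, hmap, hIval, smul_eq_mul]
  by_cases hcl : condLaw μ t xw = p
  · have hSmeas : ∀ a, MeasurableSet (Sa a) := fun a => by
      rw [← hpre a]; exact hπ (measurableSet_singleton _)
    have hCwUnion : Cw = ⋃ a, Sa a := by
      ext y
      simp only [hCw, hSa, Set.mem_setOf_eq, Set.mem_iUnion]
      exact ⟨fun h => ⟨y t, h, rfl⟩, fun ⟨a, h, _⟩ => h⟩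
    have hCwsum : μ Cw = ∑ a : Ω, μ (Sa a) := by
      rw [hCwUnion, measure_iUnion ?_ (fun a => hSmeas a), tsum_fintype]
      intro a b hab
      rw [Function.onFun, Set.disjoint_left]
      rintro y ⟨_, hya⟩ ⟨_, hyb⟩
      exact hab (hya ▸ hyb ▸ rfl)
    have htoReal : ∑ a : Ω, (μ (Sa a)).toReal = (μ Cw).toReal := by
      rw [hCwsum, ENNReal.toReal_sum (fun a _ => measure_ne_top μ _)]
    have hq0 : condLaw μ t xw ω = (μ (Sa ω)).toReal / (μ Cw).toReal := by
      rw [hSa, hCw]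
      rfl
    have core : ∑ a : Ω, (μ (Sa a)).toReal * ((if a = ω then (1 : ℝ) else 0)
        - condLaw μ t xw ω) = 0 := by
      have h1 : ∑ a : Ω, (μ (Sa a)).toReal * ((if a = ω then (1 : ℝ) else 0)
          - condLaw μ t xw ω)
          = (∑ a : Ω, (μ (Sa a)).toReal * (if a = ω then (1 : ℝ) else 0))
            - (∑ a : Ω, (μ (Sa a)).toReal) * condLaw μ t xw ω := by
        rw [Finset.sum_mul, ← Finset.sum_sub_distrib]
        exact Finset.sum_congr rfl fun a _ => by ring
      have h2 : ∑ a : Ω, (μ (Sa a)).toReal * (if a = ω then (1 : ℝ) else 0)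
          = (μ (Sa ω)).toReal := by
        rw [Finset.sum_eq_single ω]
        · simp
        · intro b _ hb; simp [hb]
        · intro h; exact absurd (Finset.mem_univ ω) h
      rw [h1, h2, htoReal, hq0]
      by_cases hz : (μ Cw).toReal = 0
      · have hle : (μ (Sa ω)).toReal ≤ (μ Cw).toReal := by
          apply ENNReal.toReal_mono (measure_ne_top μ _)
          exact measure_mono (fun y hy => hy.1)
        have : (μ (Sa ω)).toReal = 0 :=
          le_antisymm (hz ▸ hle) ENNReal.toReal_nonneg
        simp [this, hz]
      · rw [mul_comm, div_mul_cancel₀ _ hz, sub_self]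
    simp only [hcl, if_pos]
    have hrw : ∀ a : Ω, (μ (Sa a)).toReal * (G xw * ((1 : ℝ) *
        ((if a = ω then (1 : ℝ) else 0) - p ω)))
        = G xw * ((μ (Sa a)).toReal * ((if a = ω then (1 : ℝ) else 0)
          - condLaw μ t xw ω)) := by
      intro a
      rw [hcl]
      ring
    rw [Finset.sum_congr rfl (fun a _ => hrw a), ← Finset.mul_sum, core, mul_zero]
  · simp [hcl]

end Aux

open Classical in
/-- Achievability half of the main theorem: under the randomized forecasting construction
given by a signaling policy `pol` satisfying the mean-preserving condition, with the
receiver playing `â(f_n)` at every period, the sender's long-run average payoff converges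
almost surely to `Σ_p C(p) Σ_q pol(q | p) Σ_ω p(ω) u_S(ω, â(q))` — with `pol` optimal, the
value `Per(C_μ, û_S)` of the static persuasion problem. -/
theorem sender_payoff_achieves_persuasion_value
    [MeasurableSpace Ω] [MeasurableSingletonClass Ω]
    (μ : Measure (ℕ → Ω)) [IsProbabilityMeasure μ]
    (herg : Ergodic (fun x : ℕ → Ω => fun n => x (n + 1)) μ)
    (D : Finset (EuclideanSpace ℝ Ω))
    (hD : ∀ᵐ x ∂μ, ∀ n, condLaw μ n x ∈ D)
    (C : EuclideanSpace ℝ Ω → ℝ)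
    (hC : ∀ p ∈ D, ∀ᵐ x ∂μ, Tendsto
      (fun N : ℕ => (N : ℝ)⁻¹ *
        ∑ n ∈ Finset.range N, (if condLaw μ n x = p then (1 : ℝ) else 0))
      atTop (nhds (C p)))
    (F : Finset (EuclideanSpace ℝ Ω))
    (pol : EuclideanSpace ℝ Ω → EuclideanSpace ℝ Ω → ℝ)  -- pol p q = π(q | p)
    (hpol0 : ∀ p ∈ D, ∀ q ∈ F, 0 ≤ pol p q)
    (hpol1 : ∀ p ∈ D, ∑ q ∈ F, pol p q = 1)
    (hmp : ∀ q ∈ F, ∑ p ∈ D, (C p * pol p q) • (p - q) = (0 : EuclideanSpace ℝ Ω))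
    -- the randomization device: i.i.d. uniform-[0,1] random variables on (Θ, ν)
    {Θ : Type*} [MeasurableSpace Θ] (ν : Measure Θ) [IsProbabilityMeasure ν]
    (U : ℕ → Θ → ℝ) (hUmeas : ∀ n, Measurable (U n))
    (hUindep : iIndepFun U ν)
    (hUunif : ∀ n, Measure.map (U n) ν = volume.restrict (Set.Icc (0 : ℝ) 1))
    -- the randomized forecast: f_n = φ(p_n, U_n), with law π(· | p)
    (φ : EuclideanSpace ℝ Ω → ℝ → EuclideanSpace ℝ Ω)
    (hφmeas : ∀ p, Measurable (φ p))
    (hφF : ∀ p ∈ D, ∀ r : ℝ, φ p r ∈ F)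
    (hφlaw : ∀ p ∈ D, ∀ q ∈ F,
      volume.restrict (Set.Icc (0 : ℝ) 1) {r : ℝ | φ p r = q} = ENNReal.ofReal (pol p q))
    -- the sender's stage payoff and the receiver's best-response selection
    {A : Type*} [Fintype A]
    (uS : Ω → A → ℝ) (ahat : EuclideanSpace ℝ Ω → A) :
    ∀ᵐ z ∂(μ.prod ν),
      Tendsto (fun T : ℕ => (T : ℝ)⁻¹ *
          ∑ t ∈ Finset.range T, uS (z.1 t) (ahat (φ (condLaw μ t z.1) (U t z.2))))
        atTop
        (nhds (∑ p ∈ D, C p * ∑ q ∈ F, pol p q * ∑ ω, p ω * uS ω (ahat q))) := by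
  classical
  -- nonemptiness
  have hne : Nonempty (ℕ → Ω) := by
    by_contra h
    rw [not_nonempty_iff] at h
    have h1 : μ Set.univ = 1 := measure_univ
    rw [Set.univ_eq_empty_iff.mpr h, measure_empty] at h1
    exact zero_ne_one h1
  haveI hΩne : Nonempty Ω := ⟨hne.some 0⟩
  set m : Measure ((ℕ → Ω) × Θ) := μ.prod ν with hm
  -- indicator helper bounds
  have habs1 : ∀ (c : Prop) (_ : Decidable c), |(if c then (1 : ℝ) else 0)| ≤ 1 := by
    intro c hc
    split <;> simp
  -- the elementary building blocks
  -- the Z processes (martingale part) and W processes (randomization part)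
  set Zf : EuclideanSpace ℝ Ω → EuclideanSpace ℝ Ω → Ω → ℕ → ((ℕ → Ω) × Θ) → ℝ :=
    fun p q ω t z => (if condLaw μ t z.1 = p then (1 : ℝ) else 0) *
      ((if φ p (U t z.2) = q then (1 : ℝ) else 0) *
        ((if z.1 t = ω then (1 : ℝ) else 0) - p ω)) with hZf
  set Wf : EuclideanSpace ℝ Ω → EuclideanSpace ℝ Ω → ℕ → ((ℕ → Ω) × Θ) → ℝ :=
    fun p q t z => (if condLaw μ t z.1 = p then (1 : ℝ) else 0) *
      ((if φ p (U t z.2) = q then (1 : ℝ) else 0) - pol p q) with hWf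
  -- measurability of coordinate pieces
  have hgmeas : ∀ (p : EuclideanSpace ℝ Ω) (t : ℕ),
      Measurable (fun x : ℕ → Ω => if condLaw μ t x = p then (1 : ℝ) else 0) := by
    intro p t
    apply psv_meas_of_depends t
    intro x y hxy
    rw [psv_condLaw_congr μ t hxy]
  have hfmeas : ∀ (p : EuclideanSpace ℝ Ω) (q : EuclideanSpace ℝ Ω) (ω : Ω) (t : ℕ),
      Measurable (fun x : ℕ → Ω => (if condLaw μ t x = p then (1 : ℝ) else 0) *
        ((if x t = ω then (1 : ℝ) else 0) - p ω)) := by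
    intro p q ω t
    apply psv_meas_of_depends (t + 1)
    intro x y hxy
    rw [psv_condLaw_congr μ t (fun i hi => hxy i (by omega)), hxy t (by omega)]
  have hhmeas : ∀ (p q : EuclideanSpace ℝ Ω),
      Measurable (fun r : ℝ => if φ p r = q then (1 : ℝ) else 0) := by
    intro p q
    exact Measurable.ite (hφmeas p (measurableSet_singleton q)) measurable_const measurable_const
  -- the law of the forecast indicator
  have hHint : ∀ p ∈ D, ∀ q ∈ F, ∀ t : ℕ,
      ∫ θ, (if φ p (U t θ) = q then (1 : ℝ) else 0) ∂ν = pol p q := by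
    intro p hp q hq t
    have h1 : ∫ θ, (if φ p (U t θ) = q then (1 : ℝ) else 0) ∂ν
        = ∫ r, (if φ p r = q then (1 : ℝ) else 0) ∂(Measure.map (U t) ν) :=
      (integral_map (hUmeas t).aemeasurable (hhmeas p q).aestronglyMeasurable).symm
    rw [h1, hUunif t]
    have h2 : (fun r : ℝ => if φ p r = q then (1 : ℝ) else 0)
        = Set.indicator {r : ℝ | φ p r = q} (fun _ => (1 : ℝ)) := by
      funext r
      rw [Set.indicator_apply]
      rfl
    rw [h2, integral_indicator_const (1 : ℝ)
        (show MeasurableSet {r : ℝ | φ p r = q} from hφmeas p (measurableSet_singleton q)),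
      Measure.real, hφlaw p hp q hq, smul_eq_mul, mul_one, ENNReal.toReal_ofReal (hpol0 p hp q hq)]
  -- almost sure convergence of the martingale part
  have hZae : ∀ p ∈ D, ∀ q ∈ F, ∀ ω : Ω, ∀ᵐ z ∂m,
      Tendsto (fun T : ℕ => (T : ℝ)⁻¹ * ∑ t ∈ Finset.range T, Zf p q ω t z)
        atTop (nhds 0) := by
    intro p hp q hq ω
    apply psv_slln m (Zf p q ω) ?_ (1 + |p ω|) (by positivity) ?_ ?_
    · -- measurability
      intro t
      rw [hZf]
      have hemeas : Measurable (fun x : ℕ → Ω => if x t = ω then (1 : ℝ) else 0) := by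
        apply psv_meas_of_depends (t + 1)
        intro x y hxy
        rw [hxy t (by omega)]
      exact ((hgmeas p t).comp measurable_fst).mul
        (((hhmeas p q).comp ((hUmeas t).comp measurable_snd)).mul
          ((hemeas.comp measurable_fst).sub measurable_const))
    · -- boundedness
      intro t z
      rw [hZf]
      simp only
      rw [abs_mul, abs_mul]
      have h3 : |(if z.1 t = ω then (1 : ℝ) else 0) - p ω| ≤ 1 + |p ω| := by
        refine le_trans (abs_sub _ _) ?_
        have := habs1 (z.1 t = ω) inferInstance
        linarith
      calc |if condLaw μ t z.1 = p then (1 : ℝ) else 0| *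
            (|if φ p (U t z.2) = q then (1 : ℝ) else 0| *
              |(if z.1 t = ω then (1 : ℝ) else 0) - p ω|)
          ≤ 1 * (1 * (1 + |p ω|)) := by
            apply mul_le_mul (habs1 _ _) ?_ (by positivity) (by norm_num)
            apply mul_le_mul (habs1 _ _) h3 (abs_nonneg _) (by norm_num)
        _ = 1 + |p ω| := by ring
    · -- orthogonality
      have key : ∀ s t : ℕ, s < t → ∫ z, Zf p q ω s z * Zf p q ω t z ∂m = 0 := by
        intro s t hst
        set F1 : ℕ → (ℕ → Ω) → ℝ := fun n x =>
          (if condLaw μ n x = p then (1 : ℝ) else 0) *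
            ((if x n = ω then (1 : ℝ) else 0) - p ω) with hF1
        set F2 : ℕ → Θ → ℝ := fun n θ => (if φ p (U n θ) = q then (1 : ℝ) else 0) with hF2
        have hsplit : (fun z : (ℕ → Ω) × Θ => Zf p q ω s z * Zf p q ω t z)
            = fun z => (F1 s z.1 * F1 t z.1) * (F2 s z.2 * F2 t z.2) := by
          funext z
          rw [hZf, hF1, hF2]
          simp only
          ring
        rw [hm, hsplit]
        rw [integral_prod_mul (f := fun x => F1 s x * F1 t x) (g := fun θ => F2 s θ * F2 t θ)]
        have hxzero : ∫ x, F1 s x * F1 t x ∂μ = 0 := by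
          have hGdep : ∀ x y : ℕ → Ω, (∀ i < t, x i = y i) → F1 s x = F1 s y := by
            intro x y hxy
            rw [hF1]
            simp only
            rw [psv_condLaw_congr μ s (fun i hi => hxy i (by omega)), hxy s (by omega)]
          have := psv_mart_orth μ t (F1 s) hGdep p ω
          rw [← this]
        rw [hxzero, zero_mul]
      intro s t hst
      rcases Nat.lt_or_ge s t with h | h
      · exact key s t h
      · have htls : t < s := lt_of_le_of_ne h (Ne.symm hst)
        rw [← key t s htls]
        apply integral_congr_ae
        exact Eventually.of_forall fun z => mul_comm _ _
  -- almost sure convergence of the randomization part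
  have hWae : ∀ p ∈ D, ∀ q ∈ F, ∀ᵐ z ∂m,
      Tendsto (fun T : ℕ => (T : ℝ)⁻¹ * ∑ t ∈ Finset.range T, Wf p q t z)
        atTop (nhds 0) := by
    intro p hp q hq
    have hc0 : 0 ≤ pol p q := hpol0 p hp q hq
    have hc1 : pol p q ≤ 1 := by
      have h1 : pol p q ≤ ∑ q' ∈ F, pol p q' :=
        Finset.single_le_sum (fun q' hq' => hpol0 p hp q' hq') hq
      rw [hpol1 p hp] at h1
      exact h1
    apply psv_slln m (Wf p q) ?_ 1 (by norm_num) ?_ ?_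
    · intro t
      rw [hWf]
      exact ((hgmeas p t).comp measurable_fst).mul
        ((((hhmeas p q).comp ((hUmeas t).comp measurable_snd)).sub measurable_const))
    · intro t z
      rw [hWf]
      simp only
      rw [abs_mul]
      have h3 : |(if φ p (U t z.2) = q then (1 : ℝ) else 0) - pol p q| ≤ 1 := by
        split
        · rw [abs_of_nonneg (by linarith)]; linarith
        · rw [abs_of_nonpos (by linarith)]; linarith
      calc |if condLaw μ t z.1 = p then (1 : ℝ) else 0| *
            |(if φ p (U t z.2) = q then (1 : ℝ) else 0) - pol p q|
          ≤ 1 * 1 := mul_le_mul (habs1 _ _) h3 (abs_nonneg _) (by norm_num)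
        _ = 1 := by ring
    · intro s t hst
      set G1 : ℕ → (ℕ → Ω) → ℝ := fun n x =>
        (if condLaw μ n x = p then (1 : ℝ) else 0) with hG1
      set H1 : ℕ → Θ → ℝ := fun n θ =>
        (if φ p (U n θ) = q then (1 : ℝ) else 0) - pol p q with hH1
      have hsplit : (fun z : (ℕ → Ω) × Θ => Wf p q s z * Wf p q t z)
          = fun z => (G1 s z.1 * G1 t z.1) * (H1 s z.2 * H1 t z.2) := by
        funext z
        rw [hWf, hG1, hH1]
        simp only
        ring
      rw [hm, hsplit]
      rw [integral_prod_mul (f := fun x => G1 s x * G1 t x) (g := fun θ => H1 s θ * H1 t θ)]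
      have hH1meas : ∀ n, Measurable (H1 n) := fun n =>
        ((hhmeas p q).comp (hUmeas n)).sub measurable_const
      have hindep : IndepFun (H1 s) (H1 t) ν := by
        have h1 : IndepFun (U s) (U t) ν := hUindep.indepFun hst
        exact h1.comp ((hhmeas p q).sub measurable_const) ((hhmeas p q).sub measurable_const)
      have hH1int : ∀ n, Integrable (H1 n) ν := by
        intro n
        refine Integrable.mono' (integrable_const 2) (hH1meas n).aestronglyMeasurable
          (Eventually.of_forall fun θ => ?_)
        rw [hH1, Real.norm_eq_abs]
        simp only
        refine le_trans (abs_sub _ _) ?_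
        have := habs1 (φ p (U n θ) = q) inferInstance
        rw [abs_of_nonneg hc0]
        linarith
      have hH1zero : ∀ n, ∫ θ, H1 n θ ∂ν = 0 := by
        intro n
        rw [hH1]
        simp only
        rw [integral_sub ?_ (integrable_const _)]
        · rw [hHint p hp q hq n, integral_const]
          simp
        · refine Integrable.mono' (integrable_const 1)
            ((hhmeas p q).comp (hUmeas n)).aestronglyMeasurable
            (Eventually.of_forall fun θ => ?_)
          rw [Real.norm_eq_abs]
          exact habs1 _ _
      have h0 : ∫ θ, H1 s θ * H1 t θ ∂ν = (∫ θ, H1 s θ ∂ν) * ∫ θ, H1 t θ ∂ν :=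
        hindep.integral_mul_eq_mul_integral (hH1meas s).aestronglyMeasurable (hH1meas t).aestronglyMeasurable
      rw [h0, hH1zero s, hH1zero t, mul_zero, mul_zero]
  -- lift x-only a.e. statements to the product space
  have hqmp : Measure.QuasiMeasurePreserving (Prod.fst : (ℕ → Ω) × Θ → (ℕ → Ω)) m μ :=
    Measure.quasiMeasurePreserving_fst
  have hDae : ∀ᵐ z ∂m, ∀ n, condLaw μ n z.1 ∈ D := hqmp.ae hD
  have hGae : ∀ᵐ z ∂m, ∀ p ∈ D, Tendsto
      (fun N : ℕ => (N : ℝ)⁻¹ * ∑ n ∈ Finset.range N,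
        (if condLaw μ n z.1 = p then (1 : ℝ) else 0)) atTop (nhds (C p)) := by
    refine (ae_ball_iff D.countable_toSet).mpr fun p hp => ?_
    exact hqmp.ae (hC p hp)
  have hZall : ∀ᵐ z ∂m, ∀ p ∈ D, ∀ q ∈ F, ∀ ω : Ω, Tendsto
      (fun T : ℕ => (T : ℝ)⁻¹ * ∑ t ∈ Finset.range T, Zf p q ω t z) atTop (nhds 0) := by
    refine (ae_ball_iff D.countable_toSet).mpr fun p hp => ?_
    refine (ae_ball_iff F.countable_toSet).mpr fun q hq => ?_
    exact ae_all_iff.mpr fun ω => hZae p hp q hq ω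
  have hWall : ∀ᵐ z ∂m, ∀ p ∈ D, ∀ q ∈ F, Tendsto
      (fun T : ℕ => (T : ℝ)⁻¹ * ∑ t ∈ Finset.range T, Wf p q t z) atTop (nhds 0) := by
    refine (ae_ball_iff D.countable_toSet).mpr fun p hp => ?_
    refine (ae_ball_iff F.countable_toSet).mpr fun q hq => ?_
    exact hWae p hp q hq
  filter_upwards [hDae, hGae, hZall, hWall] with z hD' hG' hZ' hW'
  -- pointwise identity of the summands
  have hterm : ∀ t : ℕ, uS (z.1 t) (ahat (φ (condLaw μ t z.1) (U t z.2)))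
      = ∑ p ∈ D, (if condLaw μ t z.1 = p then (1 : ℝ) else 0) *
          ∑ q ∈ F, (if φ p (U t z.2) = q then (1 : ℝ) else 0) *
            ∑ ω : Ω, (if z.1 t = ω then (1 : ℝ) else 0) * uS ω (ahat q) := by
    intro t
    symm
    have hω : ∀ q : EuclideanSpace ℝ Ω,
        ∑ ω : Ω, (if z.1 t = ω then (1 : ℝ) else 0) * uS ω (ahat q)
          = uS (z.1 t) (ahat q) := by
      intro q
      rw [Finset.sum_eq_single (z.1 t)]
      · simp
      · intro b _ hb
        rw [if_neg (fun h => hb h.symm), zero_mul]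
      · intro h; exact absurd (Finset.mem_univ _) h
    calc ∑ p ∈ D, (if condLaw μ t z.1 = p then (1 : ℝ) else 0) *
          ∑ q ∈ F, (if φ p (U t z.2) = q then (1 : ℝ) else 0) *
            ∑ ω : Ω, (if z.1 t = ω then (1 : ℝ) else 0) * uS ω (ahat q)
        = ∑ p ∈ D, (if condLaw μ t z.1 = p then (1 : ℝ) else 0) *
            ∑ q ∈ F, (if φ p (U t z.2) = q then (1 : ℝ) else 0) * uS (z.1 t) (ahat q) := by
          refine Finset.sum_congr rfl fun p _ => ?_
          congr 1
          exact Finset.sum_congr rfl fun q _ => by rw [hω q]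
      _ = uS (z.1 t) (ahat (φ (condLaw μ t z.1) (U t z.2))) := by
          rw [Finset.sum_eq_single_of_mem (condLaw μ t z.1) (hD' t)]
          · rw [if_pos rfl, one_mul,
              Finset.sum_eq_single_of_mem (φ (condLaw μ t z.1) (U t z.2))
                (hφF _ (hD' t) (U t z.2))]
            · rw [if_pos rfl, one_mul]
            · intro b _ hb
              rw [if_neg (fun h => hb h.symm), zero_mul]
          · intro b _ hb
            rw [if_neg (fun h => hb h.symm), zero_mul]
  -- swapping the time sum inside
  have swap4 : ∀ (f : ℕ → EuclideanSpace ℝ Ω → EuclideanSpace ℝ Ω → Ω → ℝ) (T : ℕ),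
      ∑ t ∈ Finset.range T, ∑ p ∈ D, ∑ q ∈ F, ∑ ω : Ω, f t p q ω
        = ∑ p ∈ D, ∑ q ∈ F, ∑ ω : Ω, ∑ t ∈ Finset.range T, f t p q ω := by
    intro f T
    rw [Finset.sum_comm]
    refine Finset.sum_congr rfl fun p _ => ?_
    rw [Finset.sum_comm]
    refine Finset.sum_congr rfl fun q _ => ?_
    rw [Finset.sum_comm]
  -- the averaged identity
  have hswap : ∀ T : ℕ, (T : ℝ)⁻¹ *
      ∑ t ∈ Finset.range T, uS (z.1 t) (ahat (φ (condLaw μ t z.1) (U t z.2)))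
      = ∑ p ∈ D, ∑ q ∈ F, ∑ ω : Ω, uS ω (ahat q) *
          ((T : ℝ)⁻¹ * ∑ t ∈ Finset.range T,
            (if condLaw μ t z.1 = p then (1 : ℝ) else 0) *
              ((if φ p (U t z.2) = q then (1 : ℝ) else 0) *
                (if z.1 t = ω then (1 : ℝ) else 0))) := by
    intro T
    have expand : (T : ℝ)⁻¹ *
        ∑ t ∈ Finset.range T, uS (z.1 t) (ahat (φ (condLaw μ t z.1) (U t z.2)))
        = ∑ t ∈ Finset.range T, ∑ p ∈ D, ∑ q ∈ F, ∑ ω : Ω,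
            (T : ℝ)⁻¹ * ((if condLaw μ t z.1 = p then (1 : ℝ) else 0) *
              ((if φ p (U t z.2) = q then (1 : ℝ) else 0) *
                ((if z.1 t = ω then (1 : ℝ) else 0) * uS ω (ahat q)))) := by
      simp only [hterm, Finset.mul_sum]
    rw [expand, swap4]
    refine Finset.sum_congr rfl fun p _ => ?_
    refine Finset.sum_congr rfl fun q _ => ?_
    refine Finset.sum_congr rfl fun ω _ => ?_
    simp only [Finset.mul_sum]
    refine Finset.sum_congr rfl fun t _ => ?_
    ring
  -- limit of each component
  have hlim : ∀ p ∈ D, ∀ q ∈ F, ∀ ω : Ω, Tendsto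
      (fun T : ℕ => (T : ℝ)⁻¹ * ∑ t ∈ Finset.range T,
        (if condLaw μ t z.1 = p then (1 : ℝ) else 0) *
          ((if φ p (U t z.2) = q then (1 : ℝ) else 0) *
            (if z.1 t = ω then (1 : ℝ) else 0)))
      atTop (nhds (C p * (pol p q * p ω))) := by
    intro p hp q hq ω
    have hdecomp : ∀ T : ℕ, ((T : ℝ)⁻¹ * ∑ t ∈ Finset.range T, Zf p q ω t z)
          + p ω * ((T : ℝ)⁻¹ * ∑ t ∈ Finset.range T, Wf p q t z)
          + (p ω * pol p q) * ((T : ℝ)⁻¹ * ∑ t ∈ Finset.range T,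
              (if condLaw μ t z.1 = p then (1 : ℝ) else 0))
        = (T : ℝ)⁻¹ * ∑ t ∈ Finset.range T,
            (if condLaw μ t z.1 = p then (1 : ℝ) else 0) *
              ((if φ p (U t z.2) = q then (1 : ℝ) else 0) *
                (if z.1 t = ω then (1 : ℝ) else 0)) := by
      intro T
      have h1 : ∀ t : ℕ, (if condLaw μ t z.1 = p then (1 : ℝ) else 0) *
            ((if φ p (U t z.2) = q then (1 : ℝ) else 0) *
              (if z.1 t = ω then (1 : ℝ) else 0))
          = Zf p q ω t z + p ω * Wf p q t z
            + (p ω * pol p q) * (if condLaw μ t z.1 = p then (1 : ℝ) else 0) := by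
        intro t
        rw [hZf, hWf]
        simp only
        ring
      rw [Finset.sum_congr rfl (fun t ht => h1 t), Finset.sum_add_distrib,
        Finset.sum_add_distrib, ← Finset.mul_sum, ← Finset.mul_sum]
      ring
    have hcomb := ((hZ' p hp q hq ω).add ((hW' p hp q hq).const_mul (p ω))).add
      ((hG' p hp).const_mul (p ω * pol p q))
    have hval : (0 : ℝ) + p ω * 0 + (p ω * pol p q) * C p = C p * (pol p q * p ω) := by ring
    rw [← hval]
    exact hcomb.congr hdecomp
  -- assemble
  have hsum : Tendsto (fun T : ℕ => ∑ p ∈ D, ∑ q ∈ F, ∑ ω : Ω, uS ω (ahat q) *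
      ((T : ℝ)⁻¹ * ∑ t ∈ Finset.range T,
        (if condLaw μ t z.1 = p then (1 : ℝ) else 0) *
          ((if φ p (U t z.2) = q then (1 : ℝ) else 0) *
            (if z.1 t = ω then (1 : ℝ) else 0))))
      atTop (nhds (∑ p ∈ D, ∑ q ∈ F, ∑ ω : Ω,
        uS ω (ahat q) * (C p * (pol p q * p ω)))) := by
    apply tendsto_finset_sum
    intro p hp
    apply tendsto_finset_sum
    intro q hq
    apply tendsto_finset_sum
    intro ω _
    exact (hlim p hp q hq ω).const_mul (uS ω (ahat q))
  have hvaleq : (∑ p ∈ D, C p * ∑ q ∈ F, pol p q * ∑ ω, p ω * uS ω (ahat q))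
      = ∑ p ∈ D, ∑ q ∈ F, ∑ ω : Ω, uS ω (ahat q) * (C p * (pol p q * p ω)) := by
    simp only [Finset.mul_sum]
    refine Finset.sum_congr rfl fun p _ => ?_
    refine Finset.sum_congr rfl fun q _ => ?_
    refine Finset.sum_congr rfl fun ω _ => ?_
    ring
  rw [hvaleq]
  exact hsum.congr fun T => (hswap T).symm



end
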